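/- Let h : [0,∞) → [0,∞) be nonnegative and concave with A(ℓ) = ∫₀^ℓ h, and define f on (0,1] by f(exp(−A(ℓ))) = h(ℓ) (extended by f(x) = 0 for x ≤ exp(−A(∞)) when A is bounded). Then for 0 < y ≤ x ≤ 1 with x < 1 one has f(y)/√(−log y) ≤ f(x)/√(−log x). -/

import Mathlib

open MeasureTheory intervalIntegral Set

-- three-point concavity lemma
lemma chord3 (h : ℝ → ℝ) (hconc : ConcaveOn ℝ (Set.Ici 0) h)
    {p m q : ℝ} (hp : 0 ≤ p) (hpm : p ≤ m) (hmq : m ≤ q) :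
    (q - m) * h p + (m - p) * h q ≤ (q - p) * h m := by
  rcases eq_or_lt_of_le (hpm.trans hmq) with hpq | hpq
  · have hm : m = p := le_antisymm (hpq ▸ hmq) hpm
    subst hm; rw [← hpq]; linarith
  · have h1 : 0 < q - p := sub_pos.2 hpq
    have hq0 : 0 ≤ q := hp.trans hpq.le
    have hA : (0:ℝ) ≤ (q - m)/(q - p) := div_nonneg (sub_nonneg.2 hmq) h1.le
    have hB : (0:ℝ) ≤ (m - p)/(q - p) := div_nonneg (sub_nonneg.2 hpm) h1.le
    have hAB : (q - m)/(q - p) + (m - p)/(q - p) = 1 := by field_simp; ring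
    have key := hconc.2 (Set.mem_Ici.2 hp) (Set.mem_Ici.2 hq0) hA hB hAB
    have hmeq : ((q - m)/(q - p)) • p + ((m - p)/(q - p)) • q = m := by
      rw [smul_eq_mul, smul_eq_mul]; field_simp; ring
    rw [hmeq, smul_eq_mul, smul_eq_mul] at key
    calc (q - m) * h p + (m - p) * h q
        = (q - p) * ((q - m)/(q - p) * h p + (m - p)/(q - p) * h q) := by field_simp
      _ ≤ (q - p) * h m := by nlinarith [key]

lemma hInt (h : ℝ → ℝ) (hnn : ∀ x, 0 ≤ x → 0 ≤ h x)
    (hconc : ConcaveOn ℝ (Set.Ici 0) h) {M : ℝ} (hM : 0 ≤ M) :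
    IntegrableOn h (Set.Icc 0 M) := by
  have hcont : ContinuousOn h (Set.Ioi 0) := by
    have := hconc.continuousOn_interior
    rwa [interior_Ici] at this
  have hmeas : AEStronglyMeasurable h (volume.restrict (Set.Icc (0:ℝ) M)) := by
    rw [← Measure.restrict_congr_set Ioc_ae_eq_Icc]
    exact (hcont.mono Ioc_subset_Ioi_self).aestronglyMeasurable measurableSet_Ioc
  refine ⟨hmeas, HasFiniteIntegral.restrict_of_bounded (C := 2 * h M) measure_Icc_lt_top ?_⟩
  rw [ae_restrict_iff' measurableSet_Icc]
  filter_upwards with t ht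
  rw [Real.norm_eq_abs, abs_of_nonneg (hnn t ht.1)]
  rcases eq_or_lt_of_le ht.2 with rfl | htM
  · linarith [hnn t ht.1]
  · have key := chord3 h hconc ht.1 ht.2 (by linarith : M ≤ 2*M - t)
    have hnn2 := hnn (2*M - t) (by linarith [ht.1])
    nlinarith [key, hnn2, sub_pos.2 htM]

lemma integral_linear (c d u v : ℝ) :
    ∫ t in u..v, (c + d * t) = c * (v - u) + d * (v^2 - u^2)/2 := by
  have hg : IntervalIntegrable (fun t : ℝ => d * t) volume u v :=
    (by fun_prop : Continuous fun t : ℝ => d * t).intervalIntegrable _ _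
  rw [intervalIntegral.integral_add intervalIntegrable_const hg,
    intervalIntegral.integral_const_mul, integral_id, intervalIntegral.integral_const]
  simp only [smul_eq_mul]; ring

-- core inequality
lemma core (h : ℝ → ℝ) (hnn : ∀ x, 0 ≤ x → 0 ≤ h x)
    (hconc : ConcaveOn ℝ (Set.Ici 0) h) {a b : ℝ} (ha : 0 ≤ a) (hab : a ≤ b)
    (hAa : 0 < ∫ t in (0:ℝ)..a, h t) :
    (h b)^2 * (∫ t in (0:ℝ)..a, h t) ≤ (h a)^2 * (∫ t in (0:ℝ)..b, h t) := by
  have hb0 : 0 ≤ b := ha.trans hab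
  have hI : ∀ u v : ℝ, 0 ≤ u → u ≤ v → IntervalIntegrable h volume u v := by
    intro u v hu huv
    rw [intervalIntegrable_iff_integrableOn_Icc_of_le huv]
    exact (hInt h hnn hconc (hu.trans huv)).mono_set (Set.Icc_subset_Icc hu le_rfl)
  set Aa := ∫ t in (0:ℝ)..a, h t with hAadef
  set Ab := ∫ t in (0:ℝ)..b, h t with hAbdef
  have hsplit : Aa + ∫ t in a..b, h t = Ab :=
    intervalIntegral.integral_add_adjacent_intervals (hI 0 a le_rfl ha) (hI a b ha hab)
  have hABmono : Aa ≤ Ab := by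
    have : 0 ≤ ∫ t in a..b, h t :=
      intervalIntegral.integral_nonneg hab (fun t ht => hnn t (ha.trans ht.1))
    linarith
  set α := h a
  set β := h b
  have hα : 0 ≤ α := hnn a ha
  have hβ : 0 ≤ β := hnn b hb0
  rcases le_or_gt β α with hba | hba
  · nlinarith [mul_le_mul hba hba hβ hα, hABmono, hAa, sq_nonneg α]
  · -- α < β, so a < b
    have hab' : a < b := by
      rcases eq_or_lt_of_le hab with rfl | h'; · exact absurd hba (lt_irrefl _)
      · exact h'
    have ha' : 0 < a := by
      rcases eq_or_lt_of_le ha with rfl | h'; · simp [hAadef] at hAa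
      · exact h'
    -- I1
    have p1 : ∀ t ∈ Set.Icc (0:ℝ) a, (b - a) * h t ≤ (b*α - a*β) + (β - α) * t := by
      intro t ht
      have := chord3 h hconc ht.1 ht.2 hab
      nlinarith [this]
    have i1 : ∫ t in (0:ℝ)..a, (b - a) * h t
        ≤ ∫ t in (0:ℝ)..a, ((b*α - a*β) + (β - α) * t) := by
      apply intervalIntegral.integral_mono_on ha ((hI 0 a le_rfl ha).const_mul _)
        ((by fun_prop : Continuous fun t : ℝ => (b*α - a*β) + (β - α) * t).intervalIntegrable _ _) p1
    rw [intervalIntegral.integral_const_mul, integral_linear] at i1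
    -- I2
    have p2 : ∀ t ∈ Set.Icc a b, (b*α - a*β) + (β - α) * t ≤ (b - a) * h t := by
      intro t ht
      have := chord3 h hconc ha ht.1 ht.2
      nlinarith [this]
    have i2 : ∫ t in a..b, ((b*α - a*β) + (β - α) * t) ≤ ∫ t in a..b, (b - a) * h t := by
      apply intervalIntegral.integral_mono_on hab
        ((by fun_prop : Continuous fun t : ℝ => (b*α - a*β) + (β - α) * t).intervalIntegrable _ _)
        ((hI a b ha hab).const_mul _) p2
    rw [intervalIntegral.integral_const_mul, integral_linear] at i2
    have hAab : (b - a)^2 * (α + β)/2 ≤ (b - a) * (Ab - Aa) := by nlinarith [i2, hsplit]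
    have hI1 : (b - a) * Aa ≤ (b*α - a*β) * a + (β - α) * a^2/2 := by nlinarith [i1]
    nlinarith [mul_le_mul_of_nonneg_left hAab (sq_nonneg α),
      mul_le_mul_of_nonneg_left hI1 (mul_nonneg (sub_nonneg.2 hba.le) (add_nonneg hα hβ)),
      mul_nonneg (add_nonneg hα hβ) (sq_nonneg (α*(b - a) - (β - α)*a)),
      sub_pos.2 hab', hAa, hABmono]

lemma hII (h : ℝ → ℝ) (hnn : ∀ x, 0 ≤ x → 0 ≤ h x)
    (hconc : ConcaveOn ℝ (Set.Ici 0) h) {u v : ℝ} (hu : 0 ≤ u) (huv : u ≤ v) :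
    IntervalIntegrable h volume u v := by
  rw [intervalIntegrable_iff_integrableOn_Icc_of_le huv]
  exact (hInt h hnn hconc (hu.trans huv)).mono_set (Set.Icc_subset_Icc hu le_rfl)

lemma reach (h : ℝ → ℝ) (hnn : ∀ x, 0 ≤ x → 0 ≤ h x)
    (hconc : ConcaveOn ℝ (Set.Ici 0) h) (L : ℝ) (hL : 0 ≤ L) {ℓ : ℝ} (hℓ : 0 ≤ ℓ)
    (hLℓ : L ≤ ∫ t in (0:ℝ)..ℓ, h t) :
    ∃ c, 0 ≤ c ∧ c ≤ ℓ ∧ (∫ t in (0:ℝ)..c, h t) = L := by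
  have hcontA : ContinuousOn (fun u => ∫ t in (0:ℝ)..u, h t) (Set.Icc 0 ℓ) := by
    have := intervalIntegral.continuousOn_primitive_interval
      (f := h) (μ := volume) (a := 0) (b := ℓ)
      (by rw [Set.uIcc_of_le hℓ]; exact hInt h hnn hconc hℓ)
    rwa [Set.uIcc_of_le hℓ] at this
  have hmem : L ∈ Set.Icc (∫ t in (0:ℝ)..(0:ℝ), h t) (∫ t in (0:ℝ)..ℓ, h t) := by
    rw [intervalIntegral.integral_same]; exact ⟨hL, hLℓ⟩
  obtain ⟨c, hc, hceq⟩ := intermediate_value_Icc hℓ hcontA hmem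
  exact ⟨c, hc.1, hc.2, hceq⟩

theorem stmt5 (h f : ℝ → ℝ)
    (hnn : ∀ x, 0 ≤ x → 0 ≤ h x)
    (hconc : ConcaveOn ℝ (Set.Ici 0) h)
    (hf : ∀ ℓ, 0 ≤ ℓ → f (Real.exp (-(∫ t in (0:ℝ)..ℓ, h t))) = h ℓ)
    (hf0 : ∀ x : ℝ, (∀ ℓ, 0 ≤ ℓ → x ≤ Real.exp (-(∫ t in (0:ℝ)..ℓ, h t))) → f x = 0)
    (x y : ℝ) (hy : 0 < y) (hyx : y ≤ x) (hx : x < 1) :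
    f y / Real.sqrt (-Real.log y) ≤ f x / Real.sqrt (-Real.log x) := by
  have hx0 : 0 < x := lt_of_lt_of_le hy hyx
  have hLx : 0 < -Real.log x := by have := Real.log_neg hx0 hx; linarith
  have hLxy : -Real.log x ≤ -Real.log y := by
    have := Real.log_le_log hy hyx; linarith
  have hval : ∀ c : ℝ, 0 ≤ c → ∀ z : ℝ, 0 < z →
      (∫ t in (0:ℝ)..c, h t) = -Real.log z → f z = h c := by
    intro c hc z hz hcz
    have := hf c hc
    rwa [hcz, neg_neg, Real.exp_log hz] at this
  have hnotreach : ∀ z : ℝ, 0 < z → (∀ ℓ, 0 ≤ ℓ → (∫ t in (0:ℝ)..ℓ, h t) < -Real.log z) →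
      f z = 0 := by
    intro z hz hzr
    refine hf0 z (fun ℓ hℓ => ?_)
    have := (hzr ℓ hℓ).le
    calc z = Real.exp (Real.log z) := (Real.exp_log hz).symm
      _ ≤ Real.exp (-(∫ t in (0:ℝ)..ℓ, h t)) := Real.exp_le_exp.2 (by linarith)
  by_cases hr : ∃ ℓ, 0 ≤ ℓ ∧ (-Real.log y) ≤ ∫ t in (0:ℝ)..ℓ, h t
  · obtain ⟨ℓ, hℓ0, hℓ⟩ := hr
    obtain ⟨c, hc0, -, hc⟩ := reach h hnn hconc _ (by linarith) hℓ0 hℓ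
    obtain ⟨a, ha0, hac, haA⟩ := reach h hnn hconc (-Real.log x) hLx.le hc0
      (by rw [hc]; exact hLxy)
    rw [hval c hc0 y hy hc, hval a ha0 x hx0 haA, ← hc, ← haA]
    have hAa : 0 < ∫ t in (0:ℝ)..a, h t := by rw [haA]; exact hLx
    have hAc : 0 < ∫ t in (0:ℝ)..c, h t := by rw [hc]; linarith
    have key := core h hnn hconc ha0 hac hAa
    rw [div_le_div_iff₀ (Real.sqrt_pos.2 hAc) (Real.sqrt_pos.2 hAa)]
    have e1 : h c * Real.sqrt (∫ t in (0:ℝ)..a, h t)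
        = Real.sqrt ((h c)^2 * ∫ t in (0:ℝ)..a, h t) := by
      rw [Real.sqrt_mul (sq_nonneg _), Real.sqrt_sq (hnn c hc0)]
    have e2 : h a * Real.sqrt (∫ t in (0:ℝ)..c, h t)
        = Real.sqrt ((h a)^2 * ∫ t in (0:ℝ)..c, h t) := by
      rw [Real.sqrt_mul (sq_nonneg _), Real.sqrt_sq (hnn a ha0)]
    rw [e1, e2]
    exact Real.sqrt_le_sqrt key
  · push_neg at hr
    rw [hnotreach y hy hr, zero_div]
    apply div_nonneg _ (Real.sqrt_nonneg _)
    by_cases hrx : ∃ ℓ, 0 ≤ ℓ ∧ (-Real.log x) ≤ ∫ t in (0:ℝ)..ℓ, h t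
    · obtain ⟨ℓ, hℓ0, hℓ⟩ := hrx
      obtain ⟨a, ha0, -, haA⟩ := reach h hnn hconc _ hLx.le hℓ0 hℓ
      rw [hval a ha0 x hx0 haA]
      exact hnn a ha0
    · push_neg at hrx
      rw [hnotreach x hx0 hrx]
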